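/- ACD inequality for α > 1 (finite case): for probability mass functions θ, ν on a finite set with ν ⪯ θ, and any g : S → ℝ, (1/α) log ∑_x e^{α g(x)} θ(x) ≥ (1/(α−1)) log ∑_x e^{(α−1) g(x)} ν(x) − R_α(ν‖θ). -/

import Mathlib

open Finset Real
open Classical

/-- ACD inequality for α > 1 (finite case): for pmfs θ, ν with ν ⪯ θ and any g,
(1/α) log ∑ e^{αg} θ ≥ (1/(α-1)) log ∑ e^{(α-1)g} ν - R_α(ν‖θ). -/
theorem acd_inequality_big_alpha {S : Type} [Fintype S]
    (θ ν : S → ℝ) (g : S → ℝ) (α : ℝ) (hα : 1 < α)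
    (hθ0 : ∀ x, 0 ≤ θ x) (hθ1 : ∑ x, θ x = 1)
    (hν0 : ∀ x, 0 ≤ ν x) (hν1 : ∑ x, ν x = 1)
    (hνθ : ∀ x, θ x = 0 → ν x = 0) :
    (1 / α) * Real.log (∑ x, Real.exp (α * g x) * θ x) ≥
      (1 / (α - 1)) * Real.log (∑ x, Real.exp ((α - 1) * g x) * ν x) -
        (1 / (α * (α - 1))) *
          Real.log (∑ x ∈ Finset.univ.filter (fun x => 0 < ν x * θ x),
            ν x ^ α * θ x ^ (1 - α)) := by
  have hα0 : (0:ℝ) < α := by linarith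
  have hα1 : (0:ℝ) < α - 1 := by linarith
  have hαne : α ≠ 0 := ne_of_gt hα0
  have hα1ne : α - 1 ≠ 0 := ne_of_gt hα1
  -- conjugate exponents
  have hpq : Real.HolderConjugate α (α / (α - 1)) := by
    rw [Real.holderConjugate_iff]
    constructor
    · exact hα
    · field_simp
      ring
  -- the two functions for Hölder
  set f : S → ℝ := fun x => ν x * θ x ^ ((1 - α) / α) with hf_def
  set h : S → ℝ := fun x => Real.exp ((α - 1) * g x) * θ x ^ ((α - 1) / α) with hh_def
  have hprod : ∀ x, f x * h x = Real.exp ((α - 1) * g x) * ν x := by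
    intro x
    rcases eq_or_lt_of_le (hθ0 x) with h0 | h0
    · have hν : ν x = 0 := hνθ x h0.symm
      simp [hf_def, hν]
    · have : θ x ^ ((1 - α) / α) * θ x ^ ((α - 1) / α) = 1 := by
        rw [← Real.rpow_add h0]
        have : (1 - α) / α + (α - 1) / α = 0 := by ring
        rw [this, Real.rpow_zero]
      calc f x * h x = Real.exp ((α - 1) * g x) * ν x *
            (θ x ^ ((1 - α) / α) * θ x ^ ((α - 1) / α)) := by ring
        _ = Real.exp ((α - 1) * g x) * ν x := by rw [this, mul_one]
  have hfpow : ∀ x, f x ^ α = ν x ^ α * θ x ^ (1 - α) := by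
    intro x
    rw [hf_def]
    rw [Real.mul_rpow (hν0 x) (Real.rpow_nonneg (hθ0 x) _), ← Real.rpow_mul (hθ0 x)]
    congr 1
    field_simp
  have hhpow : ∀ x, h x ^ (α / (α - 1)) = Real.exp (α * g x) * θ x := by
    intro x
    rw [hh_def]
    rw [Real.mul_rpow (Real.exp_pos _).le (Real.rpow_nonneg (hθ0 x) _),
      ← Real.exp_mul, ← Real.rpow_mul (hθ0 x)]
    have h1 : (α - 1) * g x * (α / (α - 1)) = α * g x := by field_simp
    have h2 : (α - 1) / α * (α / (α - 1)) = 1 := by field_simp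
    rw [h1, h2, Real.rpow_one]
  -- Hölder
  have holder := Real.inner_le_Lp_mul_Lq_of_nonneg Finset.univ hpq
    (f := f) (g := h)
    (fun i _ => mul_nonneg (hν0 i) (Real.rpow_nonneg (hθ0 i) _))
    (fun i _ => mul_nonneg (Real.exp_pos _).le (Real.rpow_nonneg (hθ0 i) _))
  rw [Finset.sum_congr rfl (fun x _ => hprod x),
      Finset.sum_congr rfl (fun x _ => hfpow x),
      Finset.sum_congr rfl (fun x _ => hhpow x)] at holder
  -- abbreviations
  set L : ℝ := ∑ x, Real.exp ((α - 1) * g x) * ν x with hL_def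
  set A : ℝ := ∑ x, ν x ^ α * θ x ^ (1 - α) with hA_def
  set B : ℝ := ∑ x, Real.exp (α * g x) * θ x with hB_def
  -- A equals the filtered sum
  have hAfilter : (∑ x ∈ Finset.univ.filter (fun x => 0 < ν x * θ x),
      ν x ^ α * θ x ^ (1 - α)) = A := by
    rw [hA_def]
    refine Finset.sum_subset (Finset.filter_subset _ _) ?_
    intro x _ hx
    simp only [Finset.mem_filter, Finset.mem_univ, true_and, not_lt] at hx
    have : ν x * θ x = 0 := le_antisymm hx (mul_nonneg (hν0 x) (hθ0 x))
    have hνx : ν x = 0 := by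
      rcases mul_eq_zero.1 this with h' | h'
      · exact h'
      · exact hνθ x h'
    rw [hνx, Real.zero_rpow hαne, zero_mul]
  -- existence of a point with ν > 0
  obtain ⟨x0, -, hx0⟩ : ∃ x ∈ Finset.univ, 0 < ν x := by
    by_contra hc
    push_neg at hc
    have : ∑ x, ν x = 0 := Finset.sum_eq_zero fun x _ =>
      le_antisymm (hc x (Finset.mem_univ x)) (hν0 x)
    rw [hν1] at this; norm_num at this
  have hθx0 : 0 < θ x0 := by
    rcases eq_or_lt_of_le (hθ0 x0) with h0 | h0
    · exact absurd (hνθ x0 h0.symm) (ne_of_gt hx0)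
    · exact h0
  -- positivity of the three sums
  have hLpos : 0 < L :=
    Finset.sum_pos' (fun x _ => mul_nonneg (Real.exp_pos _).le (hν0 x))
      ⟨x0, Finset.mem_univ x0, mul_pos (Real.exp_pos _) hx0⟩
  have hApos : 0 < A :=
    Finset.sum_pos' (fun x _ => mul_nonneg (Real.rpow_nonneg (hν0 x) _)
      (Real.rpow_nonneg (hθ0 x) _))
      ⟨x0, Finset.mem_univ x0, mul_pos (Real.rpow_pos_of_pos hx0 _)
        (Real.rpow_pos_of_pos hθx0 _)⟩
  have hBpos : 0 < B :=
    Finset.sum_pos' (fun x _ => mul_nonneg (Real.exp_pos _).le (hθ0 x))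
      ⟨x0, Finset.mem_univ x0, mul_pos (Real.exp_pos _) hθx0⟩
  -- take logs in Hölder
  have hlog : Real.log L ≤ (1 / α) * Real.log A + (α - 1) / α * Real.log B := by
    have hRpos : 0 < A ^ (1 / α) * B ^ (1 / (α / (α - 1))) :=
      mul_pos (Real.rpow_pos_of_pos hApos _) (Real.rpow_pos_of_pos hBpos _)
    have := Real.log_le_log hLpos holder
    rw [Real.log_mul (ne_of_gt (Real.rpow_pos_of_pos hApos _))
        (ne_of_gt (Real.rpow_pos_of_pos hBpos _)),
      Real.log_rpow hApos, Real.log_rpow hBpos] at this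
    have hq : 1 / (α / (α - 1)) = (α - 1) / α := by field_simp
    rw [hq] at this
    linarith
  rw [hAfilter]
  rw [ge_iff_le, sub_le_iff_le_add]
  have key := mul_le_mul_of_nonneg_left hlog (le_of_lt (one_div_pos.2 hα1))
  have h1 : 1 / (α - 1) * ((1 / α) * Real.log A + (α - 1) / α * Real.log B)
      = 1 / (α * (α - 1)) * Real.log A + 1 / α * Real.log B := by
    field_simp
  rw [h1] at key
  linarith
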